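/- If X is a σ-discrete metric space, then there exists a coloring c : [X]² → ℕ such that for every subspace Y ⊆ X homeomorphic to ℚ, every natural number occurs as a color on [Y]², i.e., c''[Y]² = ℕ. -/
import Mathlib

namespace Stmt3

noncomputable section
open Classical

/-- weights: `w n = 2⁻ⁿ`. -/
def w (n : ℕ) : ℝ := (1/2 : ℝ) ^ n

lemma w_pos (n : ℕ) : 0 < w n := by unfold w; positivity

lemma w_add (m n : ℕ) : w (m + n) = w m * w n := pow_add _ _ _

lemma w_le_w {m n : ℕ} (h : m ≤ n) : w n ≤ w m := by
  apply pow_le_pow_of_le_one (by norm_num) (by norm_num) h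

lemma w_lt_w {m n : ℕ} (h : m < n) : w n < w m := by
  apply pow_lt_pow_right_of_lt_one₀ (by norm_num) (by norm_num) h

lemma lt_of_w_lt_w {m n : ℕ} (h : w n < w m) : m < n := by
  by_contra hc
  exact absurd (w_le_w (not_lt.mp hc)) (not_le.mpr h)

lemma le_of_w_le_w {m n : ℕ} (h : w n ≤ w m) : m ≤ n := by
  by_contra hc
  exact absurd h (not_le.mpr (w_lt_w (not_le.mp hc)))

lemma w_succ (n : ℕ) : w (n + 1) = w n / 2 := by
  simp [w, pow_succ]; ring

lemma two_w_succ (n : ℕ) : 2 * w (n + 1) = w n := by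
  rw [w_succ]; ring

/-- Separation property of a level function. -/
def Sep {X : Type*} [MetricSpace X] (lev : X → ℕ) : Prop :=
  ∀ x y : X, x ≠ y → 4 * w (max (lev x) (lev y)) ≤ dist x y

section Decomp

variable {X : Type*} [MetricSpace X]

lemma exists_lev (D : ℕ → Set X) (hD : ∀ n, DiscreteTopology (D n))
    (hcov : ⋃ n, D n = Set.univ) : ∃ lev : X → ℕ, Sep lev := by
  have hx : ∀ x : X, ∃ n, x ∈ D n := by
    intro x
    have : x ∈ ⋃ n, D n := hcov ▸ Set.mem_univ x
    exact Set.mem_iUnion.mp this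
  -- minimal level
  let nn : X → ℕ := fun x => Nat.find (hx x)
  have hnn : ∀ x, x ∈ D (nn x) := fun x => Nat.find_spec (hx x)
  -- isolation radius within own level
  have hiso : ∀ x : X, ∃ ε : ℝ, 0 < ε ∧ ∀ y ∈ D (nn x), dist x y < ε → y = x := by
    intro x
    have hdisc := hD (nn x)
    have hopen : IsOpen ({⟨x, hnn x⟩} : Set (D (nn x))) := isOpen_discrete _
    rw [Metric.isOpen_iff] at hopen
    obtain ⟨ε, hε, hball⟩ := hopen ⟨x, hnn x⟩ rfl
    refine ⟨ε, hε, ?_⟩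
    intro y hy hdy
    have : (⟨y, hy⟩ : D (nn x)) ∈ Metric.ball (⟨x, hnn x⟩ : D (nn x)) ε := by
      simp only [Metric.mem_ball, Subtype.dist_eq, dist_comm]
      exact hdy
    have := hball this
    simpa using congrArg Subtype.val this
  -- the "fineness" index within own level
  have hkk : ∀ x : X, ∃ k : ℕ, ∀ y ∈ D (nn x), y ≠ x → 1 / ((k : ℝ) + 1) < dist x y := by
    intro x
    obtain ⟨ε, hε, hsep⟩ := hiso x
    obtain ⟨k, hk⟩ := exists_nat_one_div_lt hε
    refine ⟨k, ?_⟩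
    intro y hy hne
    by_contra hc
    push_neg at hc
    exact hne (hsep y hy (lt_of_le_of_lt hc hk))
  let kk : X → ℕ := fun x => Nat.find (hkk x)
  have hkks : ∀ x, ∀ y ∈ D (nn x), y ≠ x → 1 / ((kk x : ℝ) + 1) < dist x y :=
    fun x => Nat.find_spec (hkk x)
  let idx : X → ℕ := fun x => Nat.pair (nn x) (kk x)
  -- same idx ⟹ uniformly separated
  have hsame : ∀ x y : X, x ≠ y → idx x = idx y →
      1 / (((Nat.unpair (idx x)).2 : ℝ) + 1) < dist x y := by
    intro x y hne hidx
    have h1 : nn x = nn y ∧ kk x = kk y := by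
      have := congrArg Nat.unpair hidx
      simp only [idx, Nat.unpair_pair] at this
      exact ⟨congrArg Prod.fst this, congrArg Prod.snd this⟩
    have hy : y ∈ D (nn x) := by rw [h1.1]; exact hnn y
    have : 1 / ((kk x : ℝ) + 1) < dist x y := hkks x y hy (Ne.symm hne)
    simpa [idx, Nat.unpair_pair] using this
  -- finitely many "low" points near any point
  have hlow : ∀ (x : X) (N : ℕ), ∃ r : ℝ, 0 < r ∧
      ∀ y : X, y ≠ x → idx y ≤ N → r ≤ dist x y := by
    intro x N
    induction N with
    | zero =>
      set s : ℝ := 1 / (((Nat.unpair 0).2 : ℝ) + 1) with hs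
      have hspos : 0 < s := by positivity
      by_cases h : ∃ y : X, y ≠ x ∧ idx y = 0 ∧ dist x y < s / 2
      · obtain ⟨y₀, hy₀ne, hy₀idx, hy₀d⟩ := h
        have hdy₀ : 0 < dist x y₀ := dist_pos.mpr (Ne.symm hy₀ne)
        refine ⟨min (s / 2) (dist x y₀), lt_min (by positivity) hdy₀, ?_⟩
        intro y hyne hyidx
        have hyidx0 : idx y = 0 := Nat.le_zero.mp hyidx
        by_cases hyy : y = y₀
        · subst hyy; exact min_le_right _ _
        · by_contra hc
          push_neg at hc
          have hyd : dist x y < s / 2 := lt_of_lt_of_le hc (min_le_left _ _)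
          have h2 : 1 / (((Nat.unpair (idx y)).2 : ℝ) + 1) < dist y y₀ :=
            hsame y y₀ hyy (by rw [hyidx0, hy₀idx])
          rw [hyidx0, ← hs] at h2
          have hd : dist y y₀ ≤ dist x y + dist x y₀ := dist_triangle_left _ _ _
          linarith
      · push_neg at h
        refine ⟨s / 2, by positivity, ?_⟩
        intro y hyne hyidx
        exact h y hyne (Nat.le_zero.mp hyidx)
    | succ n ih =>
      obtain ⟨r', hr', hlow'⟩ := ih
      set s : ℝ := 1 / (((Nat.unpair (n+1)).2 : ℝ) + 1) with hs
      have hspos : 0 < s := by positivity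
      by_cases h : ∃ y : X, y ≠ x ∧ idx y = n + 1 ∧ dist x y < min r' (s / 2)
      · obtain ⟨y₀, hy₀ne, hy₀idx, hy₀d⟩ := h
        have hdy₀ : 0 < dist x y₀ := dist_pos.mpr (Ne.symm hy₀ne)
        refine ⟨min (min r' (s / 2)) (dist x y₀),
          lt_min (lt_min hr' (by positivity)) hdy₀, ?_⟩
        intro y hyne hyidx
        rcases hyidx.lt_or_eq with hlt | heq
        · calc min (min r' (s / 2)) (dist x y₀) ≤ min r' (s/2) := min_le_left _ _
            _ ≤ r' := min_le_left _ _
            _ ≤ dist x y := hlow' y hyne (Nat.lt_succ_iff.mp hlt)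
        · by_cases hyy : y = y₀
          · subst hyy; exact min_le_right _ _
          · by_contra hc
            push_neg at hc
            have hyd : dist x y < s / 2 :=
              lt_of_lt_of_le hc (le_trans (min_le_left _ _) (min_le_right _ _))
            have hyd₀ : dist x y₀ < s / 2 := lt_of_lt_of_le hy₀d (min_le_right _ _)
            have h2 : 1 / (((Nat.unpair (idx y)).2 : ℝ) + 1) < dist y y₀ :=
              hsame y y₀ hyy (by rw [heq, hy₀idx])
            rw [heq, ← hs] at h2
            have hd : dist y y₀ ≤ dist x y + dist x y₀ := dist_triangle_left _ _ _
            linarith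
      · push_neg at h
        refine ⟨min r' (s / 2), lt_min hr' (by positivity), ?_⟩
        intro y hyne hyidx
        rcases hyidx.lt_or_eq with hlt | heq
        · exact le_trans (min_le_left _ _) (hlow' y hyne (Nat.lt_succ_iff.mp hlt))
        · exact h y hyne heq
  -- the level function
  have hP : ∀ x : X, ∃ L : ℕ, idx x ≤ L ∧
      ∀ y : X, y ≠ x → idx y ≤ idx x → 4 * w L ≤ dist x y := by
    intro x
    obtain ⟨r, hr, hlo⟩ := hlow x (idx x)
    obtain ⟨L', hL'⟩ : ∃ L' : ℕ, w L' < r / 4 := by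
      obtain ⟨L', hL'⟩ := exists_pow_lt_of_lt_one (by positivity : (0:ℝ) < r / 4)
        (by norm_num : (1/2 : ℝ) < 1)
      exact ⟨L', hL'⟩
    refine ⟨max (idx x) L', le_max_left _ _, ?_⟩
    intro y hyne hyidx
    have h1 : w (max (idx x) L') ≤ w L' := w_le_w (le_max_right _ _)
    have h2 : 4 * w (max (idx x) L') < r := by
      have := hL'
      unfold w at *
      nlinarith
    exact le_trans (le_of_lt h2) (hlo y hyne hyidx)
  let lev : X → ℕ := fun x => Nat.find (hP x)
  have hlev : ∀ x, idx x ≤ lev x ∧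
      ∀ y : X, y ≠ x → idx y ≤ idx x → 4 * w (lev x) ≤ dist x y :=
    fun x => Nat.find_spec (hP x)
  refine ⟨lev, ?_⟩
  intro x y hne
  rcases le_total (idx x) (idx y) with hle | hle
  · have h1 := (hlev y).2 x hne hle
    have h2 : w (max (lev x) (lev y)) ≤ w (lev y) := w_le_w (le_max_right _ _)
    rw [dist_comm y x] at h1
    nlinarith [w_pos (max (lev x) (lev y)), w_pos (lev y)]
  · have h1 := (hlev x).2 y (Ne.symm hne) hle
    have h2 : w (max (lev x) (lev y)) ≤ w (lev x) := w_le_w (le_max_left _ _)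
    nlinarith [w_pos (max (lev x) (lev y)), w_pos (lev x)]

end Decomp

section Count

variable (C H kk : ℕ) (P Q : ℕ → Prop) (A B : ℕ → ℕ)

lemma count_eq
    (hA0 : C < A 0)
    (hAB : ∀ i, i < kk → A i < B i)
    (hBA : ∀ i, i + 1 < kk → B i < A (i + 1))
    (hBH : ∀ i, i < kk → B i ≤ H)
    (hPA : ∀ i, i < kk → P (A i))
    (hQB : ∀ i, i < kk → Q (B i))
    (hQwin : ∀ m, C < m → m ≤ H → Q m → ∃ i, i < kk ∧ A i < m ∧ m ≤ B i)
    (hPwin : ∀ m i, i < kk → A i < m → m ≤ B i → ¬ P m) :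
    (((Finset.Ioc C H).filter (fun m => P m ∨ Q m)).filter
      (fun m => Q m ∧ ∃ m' ∈ (Finset.Ioc C H).filter (fun m => P m ∨ Q m),
        m' < m ∧ P m' ∧ ¬ Q m' ∧
        ∀ t ∈ (Finset.Ioc C H).filter (fun m => P m ∨ Q m), m' < t → ¬ t < m)).card
      = kk := by
  set S : Finset ℕ := (Finset.Ioc C H).filter (fun m => P m ∨ Q m) with hS
  have hSmem : ∀ t, t ∈ S → (C < t ∧ t ≤ H) ∧ (P t ∨ Q t) := by
    intro t ht
    have h := Finset.mem_filter.mp ht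
    exact ⟨Finset.mem_Ioc.mp h.1, h.2⟩
  have hSmem' : ∀ t, (C < t ∧ t ≤ H) → (P t ∨ Q t) → t ∈ S := by
    intro t h1 h2
    exact Finset.mem_filter.mpr ⟨Finset.mem_Ioc.mpr h1, h2⟩
  have mono1 : ∀ j, j < kk → ∀ i, i ≤ j → A i ≤ A j := by
    intro j
    induction j with
    | zero => intro _ i hi; rw [Nat.le_zero.mp hi]
    | succ n ih =>
      intro hj i hij
      rcases Nat.lt_succ_iff_lt_or_eq.mp (Nat.lt_succ_of_le hij) with h | h
      · have h1 : A i ≤ A n := ih (by omega) i (by omega)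
        have h2 : A n < B n := hAB n (by omega)
        have h3 : B n < A (n + 1) := hBA n hj
        omega
      · rw [h]
  have mono2 : ∀ i j, i < j → j < kk → B i < A j := by
    intro i j hij hj
    have h1 : B i < A (i + 1) := hBA i (by omega)
    have h2 : A (i + 1) ≤ A j := mono1 j hj (i + 1) (by omega)
    omega
  have hAIH : ∀ i, i < kk → C < A i ∧ A i ≤ H := by
    intro i hi
    exact ⟨lt_of_lt_of_le hA0 (mono1 i hi 0 (by omega)),
      le_trans (le_of_lt (hAB i hi)) (hBH i hi)⟩
  have hnQA : ∀ i, i < kk → ¬ Q (A i) := by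
    intro i hi hQ
    obtain ⟨j, hj, hjl, hjr⟩ := hQwin (A i) (hAIH i hi).1 (hAIH i hi).2 hQ
    rcases lt_trichotomy j i with h | h | h
    · have := mono2 j i h hi; omega
    · subst h; exact absurd hjl (lt_irrefl _)
    · have := mono1 j hj i (by omega); omega
  have hAS : ∀ i, i < kk → A i ∈ S := by
    intro i hi
    exact hSmem' _ (hAIH i hi) (Or.inl (hPA i hi))
  have hTne : ∀ i, i < kk → ((Finset.Ioc (A i) (B i)).filter Q).Nonempty := by
    intro i hi
    exact ⟨B i, Finset.mem_filter.mpr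
      ⟨Finset.mem_Ioc.mpr ⟨hAB i hi, le_refl _⟩, hQB i hi⟩⟩
  let mm : ℕ → ℕ := fun i =>
    if hi : i < kk then ((Finset.Ioc (A i) (B i)).filter Q).min' (hTne i hi) else 0
  have hmm : ∀ i, i < kk → A i < mm i ∧ mm i ≤ B i ∧ Q (mm i) ∧
      (∀ t, A i < t → t ≤ B i → Q t → mm i ≤ t) := by
    intro i hi
    have h1 := Finset.min'_mem _ (hTne i hi)
    rw [Finset.mem_filter, Finset.mem_Ioc] at h1
    refine ⟨by simp only [mm, dif_pos hi]; exact h1.1.1,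
            by simp only [mm, dif_pos hi]; exact h1.1.2,
            by simp only [mm, dif_pos hi]; exact h1.2, ?_⟩
    intro t ht1 ht2 htQ
    have ht : t ∈ (Finset.Ioc (A i) (B i)).filter Q :=
      Finset.mem_filter.mpr ⟨Finset.mem_Ioc.mpr ⟨ht1, ht2⟩, htQ⟩
    simp only [mm, dif_pos hi]
    exact Finset.min'_le _ _ ht
  have hmmS : ∀ i, i < kk → mm i ∈ S := by
    intro i hi
    obtain ⟨h1, h2, h3, _⟩ := hmm i hi
    exact hSmem' _ ⟨lt_trans (hAIH i hi).1 h1, le_trans h2 (hBH i hi)⟩ (Or.inr h3)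
  have key : S.filter (fun m => Q m ∧ ∃ m' ∈ S, m' < m ∧ P m' ∧ ¬ Q m' ∧
        ∀ t ∈ S, m' < t → ¬ t < m) = (Finset.range kk).image mm := by
    apply Finset.ext
    intro m
    rw [Finset.mem_filter, Finset.mem_image]
    constructor
    · rintro ⟨hmS, hQm, m', hm'S, hm'lt, hPm', hnQm', hgap⟩
      have hmIoc := (hSmem m hmS).1
      obtain ⟨i, hi, hwl, hwr⟩ := hQwin m hmIoc.1 hmIoc.2 hQm
      refine ⟨i, Finset.mem_range.mpr hi, ?_⟩
      obtain ⟨h1, h2, h3, hmin⟩ := hmm i hi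
      have hle : mm i ≤ m := hmin m hwl hwr hQm
      rcases eq_or_lt_of_le hle with h | h
      · omega
      · exfalso
        apply hgap (mm i) (hmmS i hi) ?_ h
        by_contra hc
        push_neg at hc
        exact hPwin m' i hi (by omega) (by omega) hPm'
    · rintro ⟨i, hi, rfl⟩
      have hi' := Finset.mem_range.mp hi
      obtain ⟨h1, h2, h3, hmin⟩ := hmm i hi'
      refine ⟨hmmS i hi', h3, ?_⟩
      have hne : (S.filter (fun t => t < mm i)).Nonempty :=
        ⟨A i, Finset.mem_filter.mpr ⟨hAS i hi', h1⟩⟩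
      obtain ⟨m', hm'S, hm'lt, hm'max⟩ :
          ∃ m', m' ∈ S ∧ m' < mm i ∧ ∀ t ∈ S, t < mm i → t ≤ m' := by
        refine ⟨(S.filter (fun t => t < mm i)).max' hne, ?_, ?_, ?_⟩
        · exact (Finset.mem_filter.mp (Finset.max'_mem _ hne)).1
        · exact (Finset.mem_filter.mp (Finset.max'_mem _ hne)).2
        · intro t htS htlt
          exact Finset.le_max' (S.filter (fun u => u < mm i)) t
            (Finset.mem_filter.mpr ⟨htS, htlt⟩)
      have hAile : A i ≤ m' := hm'max (A i) (hAS i hi') h1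
      have hnQm' : ¬ Q m' := by
        intro hQm'
        have hm'Ioc := (hSmem m' hm'S).1
        obtain ⟨j, hj, hjl, hjr⟩ := hQwin m' hm'Ioc.1 hm'Ioc.2 hQm'
        have hij : j = i := by
          rcases lt_trichotomy j i with h | h | h
          · exfalso; have := mono2 j i h hi'; omega
          · exact h
          · exfalso; have := mono2 i j h hj; omega
        subst hij
        have := hmin m' hjl hjr hQm'
        omega
      have hPm' : P m' := by
        rcases (hSmem m' hm'S).2 with h | h
        · exact h
        · exact absurd h hnQm'
      refine ⟨m', hm'S, hm'lt, hPm', hnQm', ?_⟩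
      intro t htS htgt htlt
      have := hm'max t htS htlt
      omega
  rw [key, Finset.card_image_of_injOn, Finset.card_range]
  intro i hi j hj hij
  have hi' := Finset.mem_range.mp hi
  have hj' := Finset.mem_range.mp hj
  by_contra hne
  rcases lt_trichotomy i j with h | h | h
  · obtain ⟨h1i, h2i, _, _⟩ := hmm i hi'
    obtain ⟨h1j, h2j, _, _⟩ := hmm j hj'
    have := mono2 i j h hj'
    omega
  · exact hne h
  · obtain ⟨h1i, h2i, _, _⟩ := hmm i hi'
    obtain ⟨h1j, h2j, _, _⟩ := hmm j hj'
    have := mono2 j i h hi'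
    omega

end Count

section ColorDefs
variable {X : Type*} [MetricSpace X] (lev : X → ℕ)

def adj (x e : X) : Prop := e ≠ x ∧ dist x e < w (lev e + 10)

def oS (x y : X) (m : ℕ) : Prop := ∃ e : X, lev e = m ∧ adj lev x e ∧ ¬ adj lev y e

def lowC (x y : X) : ℕ := sInf {n : ℕ | w n < 16 * dist x y}

def cnt (x y : X) : ℕ :=
  (((Finset.Ioc (lowC x y) (lev x)).filter
      (fun m => oS lev x y m ∨ oS lev y x m)).filter
    (fun m => oS lev y x m ∧
      ∃ m' ∈ (Finset.Ioc (lowC x y) (lev x)).filter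
          (fun m => oS lev x y m ∨ oS lev y x m),
        m' < m ∧ oS lev x y m' ∧ ¬ oS lev y x m' ∧
        ∀ t ∈ (Finset.Ioc (lowC x y) (lev x)).filter
            (fun m => oS lev x y m ∨ oS lev y x m),
          m' < t → ¬ t < m)).card

def col (x y : X) : ℕ :=
  if lev x < lev y then cnt lev x y else if lev y < lev x then cnt lev y x else 0

lemma col_symm (x y : X) : col lev x y = col lev y x := by
  unfold col
  rcases lt_trichotomy (lev x) (lev y) with h | h | h
  · rw [if_pos h, if_neg (not_lt_of_gt h), if_pos h]
  · rw [if_neg (by omega), if_neg (by omega), if_neg (by omega), if_neg (by omega)]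
  · rw [if_neg (not_lt_of_gt h), if_pos h, if_pos h]

variable {lev}

lemma sep_contra (hsep : Sep lev) {q e : X} {m : ℕ} (hq : lev q < m) (he : lev e = m)
    (hne : e ≠ q) (hd : dist q e < 4 * w m) : False := by
  have hs := hsep e q hne
  rw [he, max_eq_left (le_of_lt hq), dist_comm] at hs
  linarith

/-- facts about the lower cutoff. -/
lemma lowC_facts {x y : X} (hd : 0 < dist x y) (hsm : 16 * dist x y ≤ 1) :
    w (lowC x y) < 16 * dist x y ∧ 1 ≤ lowC x y ∧ 8 * dist x y ≤ w (lowC x y) := by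
  have hne : {n : ℕ | w n < 16 * dist x y}.Nonempty := by
    obtain ⟨n, hn⟩ := exists_pow_lt_of_lt_one (by linarith : (0:ℝ) < 16 * dist x y)
      (by norm_num : (1/2 : ℝ) < 1)
    exact ⟨n, hn⟩
  have h1 : w (lowC x y) < 16 * dist x y := Nat.sInf_mem hne
  have h2 : 1 ≤ lowC x y := by
    rcases Nat.eq_zero_or_pos (lowC x y) with h | h
    · exfalso
      have : w 0 < 16 * dist x y := h ▸ h1
      have hw0 : w 0 = 1 := by norm_num [w]
      linarith
    · exact h
  have h3 : 8 * dist x y ≤ w (lowC x y) := by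
    have hnm : lowC x y - 1 ∉ {n : ℕ | w n < 16 * dist x y} :=
      Nat.notMem_of_lt_sInf (show lowC x y - 1 < lowC x y by omega)
    simp only [Set.mem_setOf_eq, not_lt] at hnm
    have : lowC x y - 1 + 1 = lowC x y := by omega
    have h4 : 2 * w (lowC x y) = w (lowC x y - 1) := by
      rw [← this]; exact two_w_succ _
    linarith
  exact ⟨h1, h2, h3⟩

end ColorDefs

section Main

variable {X : Type*} [MetricSpace X] {lev : X → ℕ} {Y : Set X}

/-- candidate supply: near any point of a crowded set there are points of
arbitrarily high level. -/
lemma cand (hsep : Sep lev)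
    (hY : ∀ u ∈ Y, ∀ ε : ℝ, 0 < ε → ∃ v ∈ Y, v ≠ u ∧ dist v u < ε)
    {u : X} (hu : u ∈ Y) {ε : ℝ} (hε : 0 < ε) (B : ℕ) :
    ∃ v ∈ Y, v ≠ u ∧ 0 < dist u v ∧ dist u v < ε ∧ B < lev v := by
  set ε' : ℝ := min ε (w (B + 2)) with hε'
  have hε'pos : 0 < ε' := lt_min hε (w_pos _)
  -- at most one low point, `v₀`, near `u`
  by_cases h : ∃ v₀ : X, v₀ ≠ u ∧ lev v₀ ≤ B ∧ dist u v₀ < ε'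
  · obtain ⟨v₀, hv₀ne, hv₀lev, hv₀d⟩ := h
    have hd₀ : 0 < dist u v₀ := dist_pos.mpr (Ne.symm hv₀ne)
    obtain ⟨v, hvY, hvne, hvd⟩ := hY u hu (min ε' (dist u v₀)) (lt_min hε'pos hd₀)
    refine ⟨v, hvY, hvne, dist_pos.mpr (Ne.symm hvne), ?_, ?_⟩
    · rw [dist_comm]
      exact lt_of_lt_of_le hvd (le_trans (min_le_left _ _) (min_le_left _ _))
    · by_contra hc
      push_neg at hc
      -- v is a second low point near u, distinct from v₀
      have hvv₀ : v ≠ v₀ := by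
        intro hvv
        rw [hvv] at hvd
        have := lt_of_lt_of_le hvd (min_le_right _ _)
        rw [dist_comm] at this
        exact lt_irrefl _ this
      have hsep' := hsep v v₀ hvv₀
      have hmax : w B ≤ w (max (lev v) (lev v₀)) :=
        w_le_w (max_le hc hv₀lev)
      have hduv : dist u v < w (B + 2) := by
        rw [dist_comm]
        exact lt_of_lt_of_le hvd (le_trans (min_le_left _ _) (min_le_right _ _))
      have hduv₀ : dist u v₀ < w (B + 2) := lt_of_lt_of_le hv₀d (min_le_right _ _)
      have htri : dist v v₀ ≤ dist u v + dist u v₀ := dist_triangle_left _ _ _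
      have h1 : 2 * w (B + 2) = w (B + 1) := two_w_succ _
      have h2 : 2 * w (B + 1) = w B := two_w_succ _
      nlinarith [w_pos B, w_pos (B+1), w_pos (B+2)]
  · push_neg at h
    obtain ⟨v, hvY, hvne, hvd⟩ := hY u hu ε' hε'pos
    refine ⟨v, hvY, hvne, dist_pos.mpr (Ne.symm hvne), ?_, ?_⟩
    · rw [dist_comm]; exact lt_of_lt_of_le hvd (min_le_left _ _)
    · by_contra hc
      push_neg at hc
      have := h v hvne hc
      rw [dist_comm] at hvd
      exact absurd hvd (not_lt.mpr this)

end Main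

section Build

variable {X : Type*} [MetricSpace X] {lev : X → ℕ} {Y : Set X}

lemma h2step {p q : ℕ} (h : p + 1 ≤ q) : 2 * w (q + 100) ≤ w (p + 100) := by
  have h1 : 2 * w (p + 100 + 1) = w (p + 100) := two_w_succ _
  have h2 : w (q + 100) ≤ w (p + 100 + 1) := w_le_w (by omega)
  linarith

lemma build (hsep : Sep lev)
    (hY : ∀ u ∈ Y, ∀ ε : ℝ, 0 < ε → ∃ v ∈ Y, v ≠ u ∧ dist v u < ε)
    {z0 : X} (hz0 : z0 ∈ Y) (k : ℕ) (hk : 0 < k) :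
    ∃ (a b : ℕ → X),
      (∀ i, i < k → a i ∈ Y ∧ b i ∈ Y) ∧
      lev z0 < lev (a 0) ∧
      (∀ i, i < k → lev (a i) < lev (b i)) ∧
      (∀ i, i + 1 < k → lev (b i) < lev (a (i + 1))) ∧
      (0 < dist z0 (a 0) ∧ dist z0 (a 0) ≤ w (lev z0 + 100)) ∧
      (∀ i, i < k → dist (a i) (a (k - 1)) ≤
        2 * w (lev (b i) + 100) - 2 * w (lev (b (k - 1)) + 100)) ∧
      (∀ i, i + 1 < k → dist (b i) (b (k - 1)) ≤
        2 * w (lev (a (i + 1)) + 100) - 2 * w (lev (b (k - 1)) + 100)) ∧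
      dist z0 (b (k - 1)) ≤ 2 * w (lev (a 0) + 100) - 2 * w (lev (b (k - 1)) + 100) := by
  induction k with
  | zero => exact absurd hk (lt_irrefl 0)
  | succ n ih =>
    by_cases hn : n = 0
    · -- base case k = 1
      subst hn
      obtain ⟨a0, ha0Y, ha0ne, ha0pos, ha0d, ha0lev⟩ :=
        cand hsep hY hz0 (w_pos (lev z0 + 100)) (lev z0)
      obtain ⟨b0, hb0Y, hb0ne, hb0pos, hb0d, hb0lev⟩ :=
        cand hsep hY hz0 (w_pos (lev a0 + 100)) (lev a0)
      refine ⟨fun _ => a0, fun _ => b0, fun i _ => ⟨ha0Y, hb0Y⟩, ha0lev,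
        fun i _ => hb0lev, fun i hi => absurd hi (by omega),
        ⟨ha0pos, le_of_lt ha0d⟩, ?_, fun i hi => absurd hi (by omega), ?_⟩
      · intro i _
        simp only [dist_self]
        linarith
      · have := h2step (p := lev a0) (q := lev b0) (by omega)
        simp only
        linarith
    · -- inductive step : n ≥ 1
      obtain ⟨a, b, mem, lv1, lv2, lv3, hα, Ba, Bb, Bz⟩ := ih (by omega)
      have hn1 : 1 ≤ n := by omega
      have hmem := mem (n - 1) (by omega)
      obtain ⟨anew, hanY, hanne, hanpos, hand, hanlev⟩ :=
        cand hsep hY hmem.1 (w_pos (lev (b (n - 1)) + 100)) (lev (b (n - 1)))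
      obtain ⟨bnew, hbnY, hbnne, hbnpos, hbnd, hbnlev⟩ :=
        cand hsep hY hmem.2 (w_pos (lev anew + 100)) (lev anew)
      set a' : ℕ → X := fun i => if i = n then anew else a i with ha'
      set b' : ℕ → X := fun i => if i = n then bnew else b i with hb'
      have ha'n : a' n = anew := if_pos rfl
      have hb'n : b' n = bnew := if_pos rfl
      have ha'i : ∀ i, i ≠ n → a' i = a i := fun i h => if_neg h
      have hb'i : ∀ i, i ≠ n → b' i = b i := fun i h => if_neg h
      -- level chain facts
      have lvchain : lev (b (n - 1)) < lev anew ∧ lev anew < lev bnew :=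
        ⟨hanlev, hbnlev⟩
      -- distance facts for leaders
      have hstep1 : 2 * w (lev anew + 100) ≤ w (lev (b (n - 1)) + 100) :=
        h2step (by omega)
      have hstep2 : 2 * w (lev bnew + 100) ≤ w (lev anew + 100) :=
        h2step (by omega)
      refine ⟨a', b', ?_, ?_, ?_, ?_, ?_, ?_, ?_, ?_⟩
      · intro i hi
        by_cases h : i = n
        · rw [h, ha'n, hb'n]; exact ⟨hanY, hbnY⟩
        · rw [ha'i i h, hb'i i h]; exact mem i (by omega)
      · rw [ha'i 0 (by omega)]; exact lv1
      · intro i hi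
        by_cases h : i = n
        · rw [h, ha'n, hb'n]; exact hbnlev
        · rw [ha'i i h, hb'i i h]; exact lv2 i (by omega)
      · intro i hi
        by_cases h : i + 1 = n
        · have h5 : a' (i + 1) = anew := by rw [h, ha'n]
          rw [hb'i i (by omega), h5]
          have hii : i = n - 1 := by omega
          rw [hii]
          exact hanlev
        · rw [ha'i (i + 1) h, hb'i i (by omega)]
          exact lv3 i (by omega)
      · rw [ha'i 0 (by omega)]; exact hα
      · -- a-rail budgets
        intro i hi
        have hkn : n + 1 - 1 = n := by omega
        rw [hkn, ha'n, hb'n]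
        by_cases h : i = n
        · rw [h, ha'n, hb'n]
          simp only [dist_self]
          linarith
        · rw [ha'i i h, hb'i i h]
          have hio : i < n := by omega
          have h1 : dist (a i) anew ≤ dist (a i) (a (n - 1)) + dist (a (n - 1)) anew :=
            dist_triangle _ _ _
          have h2 := Ba i hio
          have hkn' : n - 1 = n - 1 := rfl
          have h3 : dist (a (n-1)) anew < w (lev (b (n - 1)) + 100) := hand
          -- 2 w(lev bnew+100) ≤ w(lev b(n-1) +100) (two steps up)
          have h4 : 2 * w (lev bnew + 100) ≤ w (lev (b (n - 1)) + 100) := by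
            have := h2step (p := lev (b (n-1))) (q := lev bnew) (by omega)
            linarith
          linarith
      · -- b-rail budgets
        intro i hi
        have hkn : n + 1 - 1 = n := by omega
        rw [hkn, hb'n]
        by_cases h : i + 1 = n
        · have h5 : a' (i + 1) = anew := by rw [h, ha'n]
          rw [hb'i i (by omega), h5]
          have hii : i = n - 1 := by omega
          rw [hii]
          linarith [le_of_lt hbnd, hstep2]
        · rw [ha'i (i+1) h, hb'i i (by omega)]
          have hio : i + 1 < n := by omega
          have h1 : dist (b i) bnew ≤ dist (b i) (b (n - 1)) + dist (b (n - 1)) bnew :=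
            dist_triangle _ _ _
          have h2 := Bb i hio
          have h3 : dist (b (n-1)) bnew < w (lev anew + 100) := hbnd
          have h4 : 2 * w (lev bnew + 100) ≤ w (lev (b (n - 1)) + 100) := by
            have := h2step (p := lev (b (n-1))) (q := lev bnew) (by omega)
            linarith
          linarith
      · -- z0 budget
        have hkn : n + 1 - 1 = n := by omega
        rw [hkn, hb'n, ha'i 0 (by omega)]
        have h1 : dist z0 bnew ≤ dist z0 (b (n - 1)) + dist (b (n - 1)) bnew :=
          dist_triangle _ _ _
        have h3 : dist (b (n-1)) bnew < w (lev anew + 100) := hbnd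
        have h4 : 2 * w (lev bnew + 100) ≤ w (lev (b (n - 1)) + 100) := by
          have := h2step (p := lev (b (n-1))) (q := lev bnew) (by omega)
          linarith
        linarith

end Build

section MainLemma

variable {X : Type*} [MetricSpace X] {lev : X → ℕ} {Y : Set X}

lemma main (hsep : Sep lev)
    (hY : ∀ u ∈ Y, ∀ ε : ℝ, 0 < ε → ∃ v ∈ Y, v ≠ u ∧ dist v u < ε)
    (hne : Y.Nonempty) (k : ℕ) :
    ∃ x ∈ Y, ∃ y ∈ Y, x ≠ y ∧ col lev x y = k := by
  obtain ⟨z0, hz0⟩ := hne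
  have w1 : w 1 = 1/2 := by norm_num [w]
  have w5 : w 5 = 1/32 := by norm_num [w]
  have w10 : w 10 = 1/1024 := by norm_num [w]
  have w100le : w 100 ≤ 1/2 := le_trans (w_le_w (by omega)) (le_of_eq w1)
  rcases Nat.eq_zero_or_pos k with hk0 | hkpos
  · -- trivial colour 0
    subst hk0
    obtain ⟨x, hxY, hxne, hxpos, hxd, hxlev⟩ :=
      cand hsep hY hz0 (w_pos (lev z0 + 100)) (lev z0)
    obtain ⟨y, hyY, hyne, hypos, hyd, hylev⟩ :=
      cand hsep hY hz0 (w_pos (lev x + 100)) (lev x)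
    have hα4 : 4 * w (lev x) ≤ dist z0 x := by
      have h := hsep z0 x (Ne.symm hxne)
      rwa [max_eq_right (le_of_lt hxlev)] at h
    have hwlx100 : w (lev x + 100) ≤ dist z0 x / 8 := by
      rw [w_add]
      have hm := mul_le_mul_of_nonneg_left w100le (le_of_lt (w_pos (lev x)))
      linarith [hα4]
    have hxyne : x ≠ y := fun h => absurd (congrArg lev h) (ne_of_lt hylev)
    have hdzy : dist z0 y ≤ dist z0 x / 8 := le_trans (le_of_lt hyd) hwlx100
    have hdxy1 : dist z0 x / 2 ≤ dist x y := by
      have h := dist_triangle z0 x y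
      have h2 := dist_triangle z0 y x
      rw [dist_comm y x] at h2
      linarith
    have hdxy2 : dist x y ≤ 2 * dist z0 x := by
      have h := dist_triangle x z0 y
      rw [dist_comm x z0] at h
      linarith
    have hd0 : 0 < dist x y := by linarith
    have hsm : 16 * dist x y ≤ 1 := by
      have h1 : dist z0 x ≤ w (lev z0 + 100) := le_of_lt hxd
      have h2 : w (lev z0 + 100) ≤ w 5 := w_le_w (by omega)
      rw [w5] at h2
      linarith
    obtain ⟨hC1, hCge1, hC3⟩ := lowC_facts hd0 hsm
    have hz0C : lev z0 < lowC x y := by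
      have e1 : lev z0 + 100 = lev z0 + 95 + 5 := by omega
      have h1 : w (lev z0 + 100) = w (lev z0 + 95) * w 5 := by rw [e1, w_add]
      have h2 : dist z0 x ≤ w (lev z0 + 100) := le_of_lt hxd
      have h3 : w (lowC x y) < w (lev z0 + 95) := by
        rw [w5] at h1
        linarith [hC1, hdxy2, hxd]
      have := lt_of_w_lt_w h3
      omega
    refine ⟨x, hxY, y, hyY, hxyne, ?_⟩
    unfold col
    rw [if_pos hylev]
    unfold cnt
    rw [Finset.card_eq_zero, Finset.filter_eq_empty_iff]
    intro m hm
    intro hcnt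
    obtain ⟨hoY, _⟩ := hcnt
    obtain ⟨e, he, ⟨hene, hed⟩, _⟩ := hoY
    rw [he] at hed
    have hmIoc : lowC x y < m ∧ m ≤ lev x := by
      have := (Finset.mem_filter.mp hm).1
      exact Finset.mem_Ioc.mp this
    have hqz : lev z0 < m := lt_trans hz0C hmIoc.1
    refine sep_contra hsep hqz he ?_ ?_
    · intro h
      rw [h] at he
      omega
    · have h1 : dist z0 e ≤ dist z0 y + dist y e := dist_triangle _ _ _
      have h2 : w (lev x + 100) ≤ w (m + 100) := w_le_w (by omega)
      have h3 : w (m + 100) ≤ w m := w_le_w (by omega)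
      have h4 : w (m + 10) ≤ w m := w_le_w (by omega)
      have h5 : dist z0 y < w (lev x + 100) := hyd
      linarith [w_pos m]
  · -- main case k ≥ 1
    obtain ⟨a, b, mem, lv1, lv2, lv3, ⟨hαpos, hαle⟩, Ba, Bb, Bz⟩ :=
      build hsep hY hz0 k hkpos
    have hk1 : k - 1 < k := by omega
    -- monotonicity of levels along the rails
    have hbmono : ∀ j, j < k → ∀ i, i ≤ j → lev (b i) ≤ lev (b j) := by
      intro j
      induction j with
      | zero => intro _ i hi; rw [Nat.le_zero.mp hi]
      | succ n ihb =>
        intro hj i hij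
        rcases Nat.lt_succ_iff_lt_or_eq.mp (Nat.lt_succ_of_le hij) with h | h
        · have h1 : lev (b i) ≤ lev (b n) := ihb (by omega) i (by omega)
          have h2 : lev (b n) < lev (a (n + 1)) := lv3 n hj
          have h3 : lev (a (n + 1)) < lev (b (n + 1)) := lv2 (n + 1) hj
          omega
        · rw [h]
    have hamono : ∀ j, j < k → lev (a 0) ≤ lev (a j) := by
      intro j hj
      rcases Nat.eq_zero_or_pos j with h | h
      · rw [h]
      · have h1 : lev (b (j - 1)) < lev (a j) := by
          have := lv3 (j - 1) (by omega)
          have hjj : j - 1 + 1 = j := by omega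
          rwa [hjj] at this
        have h2 : lev (a 0) < lev (b 0) := lv2 0 (by omega)
        have h3 : lev (b 0) ≤ lev (b (j - 1)) := hbmono (j - 1) (by omega) 0 (by omega)
        omega
    -- the two endpoints
    obtain ⟨x, hxY, hxne, hxpos, hxd, hxlev⟩ :=
      cand hsep hY (mem (k - 1) hk1).1 (w_pos (lev (b (k - 1)) + 100)) (lev (b (k - 1)))
    obtain ⟨y, hyY, hyne, hypos, hyd, hylev⟩ :=
      cand hsep hY (mem (k - 1) hk1).2 (w_pos (lev x + 100)) (lev x)
    have hlbx : ∀ i, i < k → lev (b i) < lev x := by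
      intro i hi
      have := hbmono (k - 1) hk1 i (by omega)
      omega
    have hlax : ∀ i, i < k → lev (a i) < lev x := by
      intro i hi
      have := lv2 i hi
      have := hlbx i hi
      omega
    -- final distance facts
    have dxa : ∀ i, i < k → dist x (a i) ≤ 2 * w (lev (b i) + 100) := by
      intro i hi
      rw [dist_comm]
      have h1 : dist (a i) x ≤ dist (a i) (a (k - 1)) + dist (a (k - 1)) x :=
        dist_triangle _ _ _
      have h2 := Ba i hi
      have h3 : dist (a (k - 1)) x < w (lev (b (k - 1)) + 100) := hxd
      have := w_pos (lev (b (k - 1)) + 100)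
      linarith
    have hwlx : w (lev x + 100) ≤ w (lev (b (k - 1)) + 100) := w_le_w (by omega)
    have dyb1 : ∀ i, i + 1 < k → dist y (b i) ≤ 2 * w (lev (a (i + 1)) + 100) := by
      intro i hi
      rw [dist_comm]
      have h1 : dist (b i) y ≤ dist (b i) (b (k - 1)) + dist (b (k - 1)) y :=
        dist_triangle _ _ _
      have h2 := Bb i hi
      have h3 : dist (b (k - 1)) y < w (lev x + 100) := hyd
      have := w_pos (lev (b (k - 1)) + 100)
      linarith
    have dyb2 : dist y (b (k - 1)) ≤ 2 * w (lev x + 100) := by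
      rw [dist_comm]
      have h3 : dist (b (k - 1)) y < w (lev x + 100) := hyd
      have := w_pos (lev x + 100)
      linarith
    have dzy : dist z0 y ≤ 2 * w (lev (a 0) + 100) := by
      have h1 : dist z0 y ≤ dist z0 (b (k - 1)) + dist (b (k - 1)) y := dist_triangle _ _ _
      have h3 : dist (b (k - 1)) y < w (lev x + 100) := hyd
      have := w_pos (lev (b (k - 1)) + 100)
      linarith [Bz]
    -- α facts
    have hα4 : 4 * w (lev (a 0)) ≤ dist z0 (a 0) := by
      have h := hsep z0 (a 0) (dist_pos.mp hαpos)
      rwa [max_eq_right (le_of_lt lv1)] at h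
    have hwla0100 : w (lev (a 0) + 100) ≤ dist z0 (a 0) / 8 := by
      rw [w_add]
      have hm := mul_le_mul_of_nonneg_left w100le (le_of_lt (w_pos (lev (a 0))))
      linarith [hα4]
    have dxa0 : dist x (a 0) ≤ dist z0 (a 0) / 4 := by
      have h1 := dxa 0 hkpos
      have h2 : w (lev (b 0) + 100) ≤ w (lev (a 0) + 100) := w_le_w (by
        have := lv2 0 hkpos; omega)
      linarith
    have dzy' : dist z0 y ≤ dist z0 (a 0) / 4 := by linarith
    have hdxy1 : dist z0 (a 0) / 2 ≤ dist x y := by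
      have h : dist z0 (a 0) ≤ dist z0 y + dist y x + dist x (a 0) := by
        have t1 : dist z0 (a 0) ≤ dist z0 y + dist y (a 0) := dist_triangle _ _ _
        have t2 : dist y (a 0) ≤ dist y x + dist x (a 0) := dist_triangle _ _ _
        linarith
      rw [dist_comm y x] at h
      linarith
    have hdxy2 : dist x y ≤ 2 * dist z0 (a 0) := by
      have t1 : dist x y ≤ dist x (a 0) + dist (a 0) y := dist_triangle _ _ _
      have t2 : dist (a 0) y ≤ dist (a 0) z0 + dist z0 y := dist_triangle _ _ _
      rw [dist_comm (a 0) z0] at t2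
      linarith
    have hd0 : 0 < dist x y := by linarith
    have hxyne : x ≠ y := fun h => absurd (congrArg lev h) (ne_of_lt hylev)
    have hsm : 16 * dist x y ≤ 1 := by
      have h2 : w (lev z0 + 100) ≤ w 5 := w_le_w (by omega)
      rw [w5] at h2
      linarith
    obtain ⟨hC1, hCge1, hC3⟩ := lowC_facts hd0 hsm
    have hCla0 : lowC x y < lev (a 0) := by
      apply lt_of_w_lt_w
      linarith [hα4, hdxy1, hC3, hd0]
    have hz0C : lev z0 < lowC x y := by
      have e1 : lev z0 + 100 = lev z0 + 95 + 5 := by omega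
      have h1 : w (lev z0 + 100) = w (lev z0 + 95) * w 5 := by rw [e1, w_add]
      have h3 : w (lowC x y) < w (lev z0 + 95) := by
        rw [w5] at h1
        linarith [hC1, hdxy2, hαle]
      have := lt_of_w_lt_w h3
      omega
    -- cluster distances
    have dxai : ∀ i, i < k → dist x (a i) ≤ dist z0 (a 0) / 4 := by
      intro i hi
      have h1 := dxa i hi
      have h2 : w (lev (b i) + 100) ≤ w (lev (a 0) + 100) := w_le_w (by
        have := hamono i hi
        have := lv2 i hi
        omega)
      linarith
    have hya : ∀ i, i < k → dist z0 (a 0) / 4 ≤ dist y (a i) := by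
      intro i hi
      have t1 : dist z0 (a 0) ≤ dist z0 y + dist y (a i) + dist (a i) (a 0) := by
        have u1 : dist z0 (a 0) ≤ dist z0 y + dist y (a 0) := dist_triangle _ _ _
        have u2 : dist y (a 0) ≤ dist y (a i) + dist (a i) (a 0) := dist_triangle _ _ _
        linarith
      have t2 : dist (a i) (a 0) ≤ dist (a i) x + dist x (a 0) := dist_triangle _ _ _
      rw [dist_comm (a i) x] at t2
      have t3 := dxai i hi
      linarith
    have dybAn : ∀ i, i < k → dist y (b i) ≤ 2 * w (lev (a 0) + 100) := by
      intro i hi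
      by_cases h : i + 1 < k
      · have h1 := dyb1 i h
        have h2 : w (lev (a (i + 1)) + 100) ≤ w (lev (a 0) + 100) :=
          w_le_w (by have := hamono (i + 1) h; omega)
        linarith
      · have hik : i = k - 1 := by omega
        rw [hik]
        have h2 : w (lev x + 100) ≤ w (lev (a 0) + 100) := w_le_w (by
          have := hlax 0 hkpos; omega)
        linarith [dyb2]
    have hxb : ∀ i, i < k → dist z0 (a 0) / 4 ≤ dist x (b i) := by
      intro i hi
      have t1 : dist z0 (a 0) ≤ dist z0 (b i) + dist (b i) x + dist x (a 0) := by
        have u1 : dist z0 (a 0) ≤ dist z0 (b i) + dist (b i) (a 0) := dist_triangle _ _ _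
        have u2 : dist (b i) (a 0) ≤ dist (b i) x + dist x (a 0) := dist_triangle _ _ _
        linarith
      have t2 : dist z0 (b i) ≤ dist z0 y + dist y (b i) := dist_triangle _ _ _
      have t3 := dybAn i hi
      rw [dist_comm (b i) x] at t1
      linarith
    have hθa : ∀ i, i < k → w (lev (a i) + 10) < dist z0 (a 0) / 4 := by
      intro i hi
      have h1 : w (lev (a i) + 10) ≤ w (lev (a 0) + 10) := w_le_w (by
        have := hamono i hi; omega)
      have h2 : w (lev (a 0) + 10) = w (lev (a 0)) * w 10 := w_add _ _
      rw [w10] at h2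
      linarith [hα4, hαpos]
    have hθb : ∀ i, i < k → w (lev (b i) + 10) < dist z0 (a 0) / 4 := by
      intro i hi
      have h1 : w (lev (b i) + 10) ≤ w (lev (a 0) + 10) := w_le_w (by
        have := hamono i hi
        have := lv2 i hi
        omega)
      have h2 : w (lev (a 0) + 10) = w (lev (a 0)) * w 10 := w_add _ _
      rw [w10] at h2
      linarith [hα4, hαpos]
    -- occupancy of marker levels
    have hPA : ∀ i, i < k → oS lev x y (lev (a i)) := by
      intro i hi
      refine ⟨a i, rfl, ⟨?_, ?_⟩, ?_⟩
      · intro h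
        exact absurd (congrArg lev h) (ne_of_lt (hlax i hi))
      · have h1 := dxa i hi
        have h2 : w (lev (b i) + 100) ≤ w (lev (a i) + 101) := w_le_w (by
          have := lv2 i hi; omega)
        have h3 : 2 * w (lev (a i) + 101) = w (lev (a i) + 100) := by
          have : lev (a i) + 101 = lev (a i) + 100 + 1 := by omega
          rw [this]; exact two_w_succ _
        have h4 : w (lev (a i) + 100) < w (lev (a i) + 10) := w_lt_w (by omega)
        linarith
      · rintro ⟨_, hdy⟩
        have := hya i hi
        have := hθa i hi
        linarith
    have hQB : ∀ i, i < k → oS lev y x (lev (b i)) := by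
      intro i hi
      refine ⟨b i, rfl, ⟨?_, ?_⟩, ?_⟩
      · intro h
        have : lev (b i) < lev y := lt_trans (hlbx i hi) hylev
        exact absurd (congrArg lev h) (ne_of_lt this)
      · have h3 : 2 * w (lev (b i) + 101) = w (lev (b i) + 100) := by
          have : lev (b i) + 101 = lev (b i) + 100 + 1 := by omega
          rw [this]; exact two_w_succ _
        have h4 : w (lev (b i) + 100) < w (lev (b i) + 10) := w_lt_w (by omega)
        by_cases h : i + 1 < k
        · have h1 := dyb1 i h
          have h2 : w (lev (a (i + 1)) + 100) ≤ w (lev (b i) + 101) := w_le_w (by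
            have := lv3 i h; omega)
          linarith
        · have hik : i = k - 1 := by omega
          have h1 : dist y (b i) ≤ 2 * w (lev x + 100) := by rw [hik]; exact dyb2
          have h2 : w (lev x + 100) ≤ w (lev (b i) + 101) := w_le_w (by
            have := hlbx i hi; omega)
          linarith
      · rintro ⟨_, hdx⟩
        have := hxb i hi
        have := hθb i hi
        linarith
    -- purity lemmas
    have hQwin : ∀ m, lowC x y < m → m ≤ lev x → oS lev y x m →
        ∃ i, i < k ∧ lev (a i) < m ∧ m ≤ lev (b i) := by
      intro m hCm hmH hQ
      by_contra hni
      push_neg at hni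
      obtain ⟨e, he, ⟨hene, hed⟩, _⟩ := hQ
      rw [he] at hed
      have hnwin : ∀ i, i < k → lev (a i) < m → lev (b i) < m := by
        intro i hi hai
        have := hni i hi hai
        omega
      have hcontra : ∀ q : X, lev q < m → dist y q ≤ 2 * w (m + 100) → False := by
        intro q hq hdq
        refine sep_contra hsep hq he ?_ ?_
        · intro h
          rw [h] at he
          omega
        · have h1 : dist q e ≤ dist q y + dist y e := dist_triangle _ _ _
          rw [dist_comm q y] at h1
          have h3 : w (m + 100) ≤ w m := w_le_w (by omega)
          have h4 : w (m + 10) ≤ w m := w_le_w (by omega)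
          linarith [w_pos m]
      by_cases h0 : m ≤ lev (a 0)
      · -- below the first marker : z0 is close
        apply hcontra z0 (lt_trans hz0C hCm)
        have h2 : w (lev (a 0) + 100) ≤ w (m + 100) := w_le_w (by omega)
        rw [dist_comm]
        linarith [dzy]
      · push_neg at h0
        obtain ⟨g, hgk, hgspec, hgnext⟩ : ∃ g, g < k ∧ lev (a g) < m ∧
            (g = k - 1 ∨ (g + 1 < k ∧ m ≤ lev (a (g + 1)))) := by
          refine ⟨Nat.findGreatest (fun i => lev (a i) < m) (k - 1), ?_, ?_, ?_⟩
          · have := Nat.findGreatest_le (P := fun i => lev (a i) < m) (k - 1)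
            omega
          · exact Nat.findGreatest_spec (P := fun i => lev (a i) < m)
              (Nat.zero_le _) h0
          · by_cases htop : Nat.findGreatest (fun i => lev (a i) < m) (k - 1) = k - 1
            · exact Or.inl htop
            · right
              have hle := Nat.findGreatest_le (P := fun i => lev (a i) < m) (k - 1)
              refine ⟨by omega, ?_⟩
              have hng := Nat.findGreatest_is_greatest (P := fun i => lev (a i) < m)
                (Nat.lt_succ_self (Nat.findGreatest (fun i => lev (a i) < m) (k - 1)))
                (show Nat.findGreatest (fun i => lev (a i) < m) (k - 1) + 1 ≤ k - 1
                  by omega)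
              exact not_lt.mp hng
        have hbg : lev (b g) < m := hnwin g hgk hgspec
        rcases hgnext with hgtop | ⟨hgk1, hgm⟩
        · apply hcontra (b (k - 1)) (by rw [← hgtop]; exact hbg)
          have h2 : w (lev x + 100) ≤ w (m + 100) := w_le_w (by omega)
          linarith [dyb2]
        · apply hcontra (b g) hbg
          have h1 := dyb1 g hgk1
          have h2 : w (lev (a (g + 1)) + 100) ≤ w (m + 100) := w_le_w (by omega)
          linarith
    have hPwin : ∀ m i, i < k → lev (a i) < m → m ≤ lev (b i) → ¬ oS lev x y m := by
      intro m i hi hai hbi hP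
      obtain ⟨e, he, ⟨hene, hed⟩, _⟩ := hP
      rw [he] at hed
      refine sep_contra hsep (q := a i) hai he ?_ ?_
      · intro h
        rw [h] at he
        omega
      · have h1 : dist (a i) e ≤ dist (a i) x + dist x e := dist_triangle _ _ _
        rw [dist_comm (a i) x] at h1
        have h2 := dxa i hi
        have h3 : w (lev (b i) + 100) ≤ w (m + 100) := w_le_w (by omega)
        have h4 : w (m + 100) ≤ w m := w_le_w (by omega)
        have h5 : w (m + 10) ≤ w m := w_le_w (by omega)
        linarith [w_pos m]
    -- count
    have hcnt := count_eq (lowC x y) (lev x) k (oS lev x y) (oS lev y x)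
      (fun i => lev (a i)) (fun i => lev (b i)) hCla0 lv2 lv3
      (fun i hi => le_of_lt (hlbx i hi)) hPA hQB hQwin hPwin
    refine ⟨x, hxY, y, hyY, hxyne, ?_⟩
    unfold col
    rw [if_pos hylev]
    show cnt lev x y = k
    unfold cnt
    exact hcnt

end MainLemma

end
end Stmt3

/- STATEMENT 3: If `X` is a σ-discrete metric space, then there is a coloring
`c` of the pairs of `X` by natural numbers such that every subspace `Y ⊆ X`
homeomorphic to ℚ realizes every natural number as a color on its pairs. -/
theorem stmt_3 {X : Type*} [MetricSpace X]
    (D : ℕ → Set X) (hD : ∀ n, DiscreteTopology (D n)) (hcov : ⋃ n, D n = Set.univ) :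
    ∃ c : X → X → ℕ, (∀ x y, c x y = c y x) ∧
      ∀ Y : Set X, Nonempty (Y ≃ₜ ℚ) →
        ∀ n : ℕ, ∃ x ∈ Y, ∃ y ∈ Y, x ≠ y ∧ c x y = n := by
  obtain ⟨lev, hsep⟩ := Stmt3.exists_lev D hD hcov
  refine ⟨Stmt3.col lev, Stmt3.col_symm lev, ?_⟩
  intro Y hYhom n
  obtain ⟨e⟩ := hYhom
  have hY : ∀ u ∈ Y, ∀ ε : ℝ, 0 < ε → ∃ v ∈ Y, v ≠ u ∧ dist v u < ε := by
    intro u hu ε hε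
    set u' : Y := ⟨u, hu⟩ with hu'
    have hc : ContinuousAt e.symm (e u') := e.symm.continuous.continuousAt
    rw [Metric.continuousAt_iff] at hc
    obtain ⟨δ, hδ, hδ'⟩ := hc ε hε
    obtain ⟨r, hr0, hrδ⟩ := exists_rat_btwn hδ
    have hr0' : (0 : ℚ) < r := by exact_mod_cast hr0
    set q' : ℚ := e u' + r with hq'
    have hqd : dist q' (e u') < δ := by
      rw [Rat.dist_eq]
      have : (q' : ℝ) - (e u' : ℝ) = (r : ℝ) := by
        rw [hq']
        push_cast
        ring
      rw [this, abs_of_pos hr0]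
      exact hrδ
    have hqne : q' ≠ e u' := by
      rw [hq']
      intro h
      have h0 : r = 0 := by linarith [h]
      exact absurd h0 (ne_of_gt hr0')
    have hvu : e.symm q' ≠ u' := by
      intro h
      apply hqne
      have := congrArg e h
      rw [Homeomorph.apply_symm_apply] at this
      rw [this]
    refine ⟨(e.symm q' : Y).1, (e.symm q').2, ?_, ?_⟩
    · intro h
      exact hvu (Subtype.ext h)
    · have h2 := hδ' hqd
      rw [Homeomorph.symm_apply_apply, Subtype.dist_eq] at h2
      exact h2
  have hne : Y.Nonempty := ⟨(e.symm 0).1, (e.symm 0).2⟩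
  exact Stmt3.main hsep hY hne n
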